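/- Let βℕ denote the Stone–Čech compactification of the natural numbers with the discrete topology. Then the set NM(C(βℕ)) of bounded linear operators on C(βℕ) that are not weak multipliers is spaceable in L(C(βℕ)). -/

import Mathlib

open Filter Topology

/-- A bounded linear operator `T` on `C(K, ℝ)` is a *weak multiplier* if for every bounded
pairwise disjoint sequence `(e_n)` in `C(K, ℝ)` and every sequence `(x_n)` in `K` with
`e_n (x_n) = 0` for all `n`, one has `T (e_n) (x_n) → 0`. -/
def IsWeakMultiplier {K : Type*} [TopologicalSpace K] [CompactSpace K]
    (T : C(K, ℝ) →L[ℝ] C(K, ℝ)) : Prop :=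
  ∀ (e : ℕ → C(K, ℝ)) (x : ℕ → K),
    (∃ M : ℝ, ∀ n, ‖e n‖ ≤ M) →
    (∀ i j, i ≠ j → e i * e j = 0) →
    (∀ n, (e n) (x n) = 0) →
    Filter.Tendsto (fun n => (T (e n)) (x n)) Filter.atTop (nhds 0)

/-- An operator on `C(K, ℝ)` is *weakly compact* if the image of the closed unit ball has
compact closure in the weak topology. -/
def IsWeaklyCompactOp {K : Type*} [TopologicalSpace K] [CompactSpace K]
    (S : C(K, ℝ) →L[ℝ] C(K, ℝ)) : Prop :=
  IsCompact (closure ((toWeakSpace ℝ C(K, ℝ)) '' (S '' Metric.closedBall 0 1)))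

/-- An operator on `C(K, ℝ)` is a *weak multiplication* if it has the form `g•I + S` with
`g ∈ C(K, ℝ)` and `S` weakly compact. -/
def IsWeakMultiplication {K : Type*} [TopologicalSpace K] [CompactSpace K]
    (T : C(K, ℝ) →L[ℝ] C(K, ℝ)) : Prop :=
  ∃ (g : C(K, ℝ)) (S : C(K, ℝ) →L[ℝ] C(K, ℝ)),
    IsWeaklyCompactOp S ∧ T = ContinuousLinearMap.mul ℝ C(K, ℝ) g + S

/-- A subset `A` of a real vector space is *lineable* if `A ∪ {0}` contains an
infinite-dimensional subspace. -/
def Lineable {X : Type*} [AddCommGroup X] [Module ℝ X] (A : Set X) : Prop :=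
  ∃ W : Submodule ℝ X, ¬ FiniteDimensional ℝ W ∧ (W : Set X) ⊆ A ∪ {0}

/-- A subset `A` of a real normed space is *spaceable* if `A ∪ {0}` contains a closed
infinite-dimensional subspace. -/
def Spaceable {X : Type*} [NormedAddCommGroup X] [NormedSpace ℝ X] (A : Set X) : Prop :=
  ∃ W : Submodule ℝ X, IsClosed (W : Set X) ∧ ¬ FiniteDimensional ℝ W ∧ (W : Set X) ⊆ A ∪ {0}


noncomputable section NWMaux

namespace NWMaux

local notation "βℕ" => StoneCech ℕ
local notation "CB" => C(StoneCech ℕ, ℝ)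

lemma hshift : Continuous (fun n : ℕ => stoneCechUnit (n + 1) : ℕ → βℕ) :=
  continuous_of_discreteTopology

lemma hproj : Continuous (fun n : ℕ => stoneCechUnit (Nat.unpair n).1 : ℕ → βℕ) :=
  continuous_of_discreteTopology

def shiftC : C(βℕ, βℕ) := ⟨stoneCechExtend hshift, continuous_stoneCechExtend _⟩
def projC : C(βℕ, βℕ) := ⟨stoneCechExtend hproj, continuous_stoneCechExtend _⟩

lemma shiftC_unit (n : ℕ) : shiftC (stoneCechUnit n) = stoneCechUnit (n + 1) :=
  congrFun (stoneCechExtend_extends hshift) n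

lemma projC_unit (n : ℕ) : projC (stoneCechUnit n) = stoneCechUnit (Nat.unpair n).1 :=
  congrFun (stoneCechExtend_extends hproj) n

def chiAux (k : ℕ) : ℕ → Set.Icc (0:ℝ) 1 := fun n =>
  if n = k then ⟨1, by norm_num⟩ else ⟨0, by norm_num⟩

lemma hchi (k : ℕ) : Continuous (chiAux k) := continuous_of_discreteTopology

def chi (k : ℕ) : CB :=
  ⟨fun x => ((stoneCechExtend (hchi k) x : Set.Icc (0:ℝ) 1) : ℝ),
   continuous_subtype_val.comp (continuous_stoneCechExtend _)⟩

lemma chi_unit (k n : ℕ) : chi k (stoneCechUnit n) = if n = k then 1 else 0 := by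
  have h : stoneCechExtend (hchi k) (stoneCechUnit n) = chiAux k n :=
    congrFun (stoneCechExtend_extends (hchi k)) n
  show ((stoneCechExtend (hchi k) (stoneCechUnit n) : Set.Icc (0:ℝ) 1) : ℝ) = _
  rw [h, chiAux]
  split <;> rfl

lemma chi_mem (k : ℕ) (x : βℕ) : chi k x ∈ Set.Icc (0:ℝ) 1 :=
  (stoneCechExtend (hchi k) x).2

lemma norm_chi_le (k : ℕ) : ‖chi k‖ ≤ 1 := by
  rw [ContinuousMap.norm_le _ zero_le_one]
  intro x
  have h := chi_mem k x
  rw [Real.norm_eq_abs, abs_le]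
  exact ⟨by linarith [h.1], h.2⟩

lemma eq_zero_of_unit (F : CB) (h : ∀ n : ℕ, F (stoneCechUnit n) = 0) : F = 0 := by
  ext x
  have : (F : βℕ → ℝ) = (0 : CB) :=
    F.continuous.ext_on (denseRange_stoneCechUnit (α := ℕ)) (map_continuous _)
      (by rintro _ ⟨n, rfl⟩; exact h n)
  exact congrFun this x

lemma chi_disjoint {a b : ℕ} (hab : a ≠ b) : chi a * chi b = 0 := by
  apply eq_zero_of_unit
  intro n
  rw [ContinuousMap.mul_apply, chi_unit, chi_unit]
  rcases eq_or_ne n a with rfl | h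
  · rw [if_neg hab, mul_zero]
  · rw [if_neg h, zero_mul]

lemma norm_le_of_unit (F : CB) {c : ℝ} (hc : 0 ≤ c)
    (h : ∀ n : ℕ, ‖F (stoneCechUnit n)‖ ≤ c) : ‖F‖ ≤ c := by
  rw [ContinuousMap.norm_le _ hc]
  intro x
  have hcl : IsClosed {y : βℕ | ‖F y‖ ≤ c} :=
    isClosed_le (F.continuous.norm) continuous_const
  have hsub : Set.range (stoneCechUnit : ℕ → βℕ) ⊆ {y : βℕ | ‖F y‖ ≤ c} := by
    rintro _ ⟨n, rfl⟩; exact h n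
  have := hcl.closure_subset_iff.mpr hsub
  exact this (by rw [(denseRange_stoneCechUnit (α := ℕ)).closure_eq]; trivial)

def compShiftL : CB →L[ℝ] CB :=
  LinearMap.mkContinuous
    { toFun := fun f => f.comp shiftC
      map_add' := fun f g => by ext x; simp [ContinuousMap.comp_apply]
      map_smul' := fun c f => by ext x; simp [ContinuousMap.comp_apply] }
    1 (fun f => by
      rw [one_mul]
      exact (ContinuousMap.norm_le _ (norm_nonneg f)).mpr
        (fun x => f.norm_coe_le_norm (shiftC x)))

def Psi : CB →ₗ[ℝ] (CB →L[ℝ] CB) where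
  toFun g := (ContinuousLinearMap.mul ℝ CB (g.comp projC)).comp compShiftL
  map_add' g g' := by
    ext f x
    simp [ContinuousLinearMap.mul_apply', ContinuousMap.comp_apply, add_mul]
  map_smul' c g := by
    ext f x
    simp [ContinuousLinearMap.mul_apply', ContinuousMap.comp_apply, mul_assoc]

lemma Psi_apply (g f : CB) (x : βℕ) : Psi g f x = g (projC x) * f (shiftC x) := rfl

lemma norm_Psi_le (g : CB) : ‖Psi g‖ ≤ ‖g‖ := by
  apply ContinuousLinearMap.opNorm_le_bound _ (norm_nonneg g)
  intro f
  apply (ContinuousMap.norm_le _ (by positivity)).mpr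
  intro x
  rw [Psi_apply, norm_mul]
  exact mul_le_mul (g.norm_coe_le_norm _) (f.norm_coe_le_norm _) (norm_nonneg _)
    (norm_nonneg _)

lemma le_norm_Psi (g : CB) : ‖g‖ ≤ ‖Psi g‖ := by
  refine norm_le_of_unit g (norm_nonneg (Psi g)) ?_
  intro n
  have h1 : g (stoneCechUnit n) = Psi g 1 (stoneCechUnit (Nat.pair n 0)) := by
    rw [Psi_apply, projC_unit, Nat.unpair_pair, ContinuousMap.one_apply, mul_one]
  rw [h1]
  calc ‖Psi g 1 (stoneCechUnit (Nat.pair n 0))‖ ≤ ‖Psi g 1‖ :=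
        (Psi g 1).norm_coe_le_norm _
    _ ≤ ‖Psi g‖ * ‖(1 : CB)‖ := (Psi g).le_opNorm 1
    _ = ‖Psi g‖ := by rw [norm_one, mul_one]

lemma Psi_antilipschitz : AntilipschitzWith 1 ⇑Psi :=
  AddMonoidHomClass.antilipschitz_of_bound Psi (fun g => by
    rw [NNReal.coe_one, one_mul]; exact le_norm_Psi g)

lemma Psi_lipschitz : LipschitzWith (Real.toNNReal 1) ⇑Psi :=
  AddMonoidHomClass.lipschitz_of_bound Psi 1 (fun g => by
    rw [one_mul]; exact norm_Psi_le g)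

lemma Psi_injective : Function.Injective Psi := by
  intro g g' h
  have hx : ∀ n : ℕ, (g - g') (stoneCechUnit n) = 0 := by
    intro n
    have h2 := congrArg
      (fun T : CB →L[ℝ] CB => T 1 (stoneCechUnit (Nat.pair n 0))) h
    simp only [Psi_apply, projC_unit, Nat.unpair_pair, ContinuousMap.one_apply,
      mul_one] at h2
    rw [ContinuousMap.sub_apply, h2, sub_self]
  exact sub_eq_zero.mp (eq_zero_of_unit _ hx)

lemma chi_linearIndependent : LinearIndependent ℝ chi := by
  rw [linearIndependent_iff']
  intro s g h j hj
  have hev := congrArg (fun F : CB => F (stoneCechUnit j)) h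
  simp only [ContinuousMap.coe_sum, Finset.sum_apply, ContinuousMap.coe_smul,
    Pi.smul_apply, smul_eq_mul, ContinuousMap.zero_apply, ContinuousMap.coe_zero,
    Pi.zero_apply] at hev
  have h2 : ∑ i ∈ s, g i * chi i (stoneCechUnit j) = g j := by
    have hc : ∀ i ∈ s, g i * chi i (stoneCechUnit j) = if i = j then g i else 0 := by
      intro i _
      rw [chi_unit]
      rcases eq_or_ne i j with rfl | h'
      · rw [if_pos rfl, if_pos rfl, mul_one]
      · rw [if_neg h', if_neg (Ne.symm h'), mul_zero]
    rw [Finset.sum_congr rfl hc, Finset.sum_ite_eq' s j g, if_pos hj]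
  rw [h2] at hev
  exact hev

lemma Psi_not_weakMultiplier {g : CB} (hg : g ≠ 0) : ¬ IsWeakMultiplier (Psi g) := by
  have hm : ∃ m : ℕ, g (stoneCechUnit m) ≠ 0 := by
    by_contra h
    push_neg at h
    exact hg (eq_zero_of_unit g h)
  obtain ⟨m, hm⟩ := hm
  intro hwm
  have key := hwm (fun i => chi (Nat.pair m i + 1)) (fun i => stoneCechUnit (Nat.pair m i))
    ⟨1, fun i => norm_chi_le _⟩
    (fun i j hij => chi_disjoint (fun h =>
      hij (Nat.pair_eq_pair.mp (Nat.succ_injective h)).2))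
    (fun i => by
      rw [chi_unit, if_neg (by omega : ¬(Nat.pair m i = Nat.pair m i + 1))])
  have hval : (fun i => (Psi g (chi (Nat.pair m i + 1))) (stoneCechUnit (Nat.pair m i)))
      = fun _ => g (stoneCechUnit m) := by
    funext i
    rw [Psi_apply, projC_unit, Nat.unpair_pair, shiftC_unit, chi_unit, if_pos rfl, mul_one]
  rw [hval] at key
  exact hm (tendsto_nhds_unique tendsto_const_nhds key)

end NWMaux

end NWMaux

set_option maxHeartbeats 1000000 in
set_option synthInstance.maxHeartbeats 400000 in
/-- The set of operators on `C(βℕ, ℝ)` that are not weak multipliers is spaceable, where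
`βℕ` is the Stone–Čech compactification of the discrete space `ℕ`. -/
theorem spaceable_nonWeakMultipliers_stoneCech_nat :
    Spaceable {T : C(StoneCech ℕ, ℝ) →L[ℝ] C(StoneCech ℕ, ℝ) | ¬ IsWeakMultiplier T} := by
  refine ⟨LinearMap.range NWMaux.Psi, ?_, ?_, ?_⟩
  · rw [LinearMap.coe_range]
    exact NWMaux.Psi_antilipschitz.isClosed_range
      NWMaux.Psi_lipschitz.uniformContinuous
  · intro hfd
    have : FiniteDimensional ℝ C(StoneCech ℕ, ℝ) :=
      FiniteDimensional.of_injective (V₂ := LinearMap.range NWMaux.Psi) NWMaux.Psi.rangeRestrict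
        (NWMaux.Psi.injective_rangeRestrict_iff.mpr NWMaux.Psi_injective)
    exact Module.Finite.not_linearIndependent_of_infinite (ι := ℕ)
      (v := NWMaux.chi) NWMaux.chi_linearIndependent
  · rintro T ⟨g, rfl⟩
    rcases eq_or_ne g 0 with rfl | hg
    · right
      simp only [map_zero, Set.mem_singleton_iff]
    · exact Or.inl (NWMaux.Psi_not_weakMultiplier hg)
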